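/- arXiv:2307.10535 — 2 statements merged into one kernel-verified Lean document; each statement's English description precedes it below -/
import Mathlib

section
/- Let (G,·,▷,Φ) be a twisted post group with sub-adjacent operation ∘, and for a,b∈G, e_{a∘b} = e_b, where e_x = (L_x^▷)^{-1}(Φ(x)^{-1}·x). -/
/-- A (left) twisted post group: a group `G` with a binary operation `tri` (written `▷`)
and a cocycle `phi` such that each left multiplication `tri a` is a group automorphism,
`(a ∘ b) ▷ c = a ▷ (b ▷ c)` and `Φ(a ∘ b) = a ∘ Φ(b)`, where `a ∘ b = Φ(a)·(a ▷ b)`. -/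
structure TPG (G : Type*) [Group G] where
  tri : G → G → G
  phi : G → G
  tri_mul : ∀ a b c : G, tri a (b * c) = tri a b * tri a c
  tri_bij : ∀ a : G, Function.Bijective (tri a)
  tri_assoc : ∀ a b c : G, tri (phi a * tri a b) c = tri a (tri b c)
  phi_comp : ∀ a b : G, phi (phi a * tri a b) = phi a * tri a (phi b)

namespace TPG

variable {G : Type*} [Group G] (T : TPG G)

/-- The sub-adjacent operation `a ∘ b = Φ(a)·(a ▷ b)`. -/
def circ (a b : G) : G := T.phi a * T.tri a b

/-- `e_a = (L_a^▷)⁻¹(Φ(a)⁻¹·a)`. -/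
noncomputable def e (a : G) : G := Function.invFun (T.tri a) ((T.phi a)⁻¹ * a)

/-- `a† = (L_a^▷)⁻¹(Φ(a)⁻¹·e_a)`. -/
noncomputable def dag (a : G) : G := Function.invFun (T.tri a) ((T.phi a)⁻¹ * T.e a)

end TPG

lemma TPG.tri_inv {G : Type*} [Group G] (T : TPG G) (a b : G) :
    T.tri a b⁻¹ = (T.tri a b)⁻¹ := by
  have h1 : T.tri a 1 = 1 := by
    have h := T.tri_mul a 1 1
    rw [mul_one] at h
    exact left_eq_mul.mp h
  have := T.tri_mul a b b⁻¹
  rw [mul_inv_cancel, h1] at this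
  exact eq_inv_of_mul_eq_one_right this.symm

lemma TPG.tri_e {G : Type*} [Group G] (T : TPG G) (a : G) :
    T.tri a (T.e a) = (T.phi a)⁻¹ * a :=
  Function.invFun_eq ((T.tri_bij a).surjective _)

/-- `e_{a ∘ b} = e_b`. -/
theorem e_circ {G : Type*} [Group G] (T : TPG G) (a b : G) :
    T.e (T.circ a b) = T.e b := by
  apply (T.tri_bij (T.circ a b)).injective
  rw [T.tri_e]
  show (T.phi (T.phi a * T.tri a b))⁻¹ * T.circ a b = T.tri (T.phi a * T.tri a b) (T.e b)
  rw [T.tri_assoc, T.tri_e, T.phi_comp, TPG.circ, T.tri_mul, T.tri_inv, mul_inv_rev]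
  group
end

section
/- Let (G,·,▷,Φ) be a twisted post group with surjective cocycle Φ. Then the sub-adjacent semigroup (G,∘) is a group, and defining a•b = (a∘1†)∘b makes (G,·,•) a skew left brace: (G,·) and (G,•) are groups and a•(b·c) = (a•b)·a^{-1}·(a•c) for all a,b,c. -/
namespace TPG

variable {G : Type*} [Group G] (T : TPG G)

lemma tri_one (a : G) : T.tri a 1 = 1 := by
  have h : (1:G) * T.tri a 1 = T.tri a 1 * T.tri a 1 := by
    rw [one_mul, ← T.tri_mul, mul_one]
  exact (mul_right_cancel h).symm

lemma tri_inv_s14 (a b : G) : T.tri a b⁻¹ = (T.tri a b)⁻¹ :=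
  eq_inv_of_mul_eq_one_left (by rw [← T.tri_mul, inv_mul_cancel, T.tri_one])

lemma tri_inj (a : G) : Function.Injective (T.tri a) := (T.tri_bij a).1

lemma circ_assoc (a b c : G) : T.circ (T.circ a b) c = T.circ a (T.circ b c) := by
  simp only [circ, T.phi_comp, T.tri_assoc, T.tri_mul, mul_assoc]

lemma circ_left_cancel {a x y : G} (h : T.circ a x = T.circ a y) : x = y := by
  apply T.tri_inj a
  exact mul_left_cancel (a := T.phi a) h

lemma tri_e_s14 (a : G) : T.tri a (T.e a) = (T.phi a)⁻¹ * a :=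
  Function.rightInverse_invFun (T.tri_bij a).2 _

lemma circ_e (a : G) : T.circ a (T.e a) = a := by
  rw [circ, T.tri_e_s14, mul_inv_cancel_left]

lemma e_circ (a b : G) : T.e (T.circ a b) = T.e b := by
  apply T.tri_inj (T.circ a b)
  rw [T.tri_e_s14]
  simp only [circ, T.tri_assoc, T.phi_comp]
  rw [T.tri_e_s14 b, T.tri_mul, T.tri_inv_s14]
  group

lemma circ_one (a : G) : T.circ a 1 = T.phi a := by
  rw [circ, T.tri_one, mul_one]

variable (hsurj : Function.Surjective T.phi)
include hsurj

lemma e_const (c : G) : T.e c = T.e 1 := by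
  obtain ⟨a, ha⟩ := hsurj c
  have : c = T.circ a 1 := by rw [T.circ_one, ha]
  rw [this, T.e_circ]

lemma right_id (a : G) : T.circ a (T.e 1) = a := by
  rw [← T.e_const hsurj a, T.circ_e]

lemma left_id (x : G) : T.circ (T.e 1) x = x := by
  apply T.circ_left_cancel (a := T.e 1)
  rw [← T.circ_assoc, T.right_id hsurj]

lemma circ_inv_ex (a : G) : ∃ y, T.circ a y = T.e 1 ∧ T.circ y a = T.e 1 := by
  obtain ⟨y, hy⟩ := (T.tri_bij a).2 ((T.phi a)⁻¹ * T.e 1)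
  have hay : T.circ a y = T.e 1 := by rw [circ, hy, mul_inv_cancel_left]
  obtain ⟨z, hz⟩ := (T.tri_bij y).2 ((T.phi y)⁻¹ * T.e 1)
  have hyz : T.circ y z = T.e 1 := by rw [circ, hz, mul_inv_cancel_left]
  refine ⟨y, hay, ?_⟩
  calc T.circ y a = T.circ (T.circ y a) (T.e 1) := (T.right_id hsurj _).symm
    _ = T.circ (T.circ y a) (T.circ y z) := by rw [hyz]
    _ = T.circ y (T.circ (T.circ a y) z) := by rw [T.circ_assoc, T.circ_assoc]
    _ = T.e 1 := by rw [hay, T.left_id hsurj, hyz]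

omit hsurj in
lemma circ_dag (a : G) : T.circ a (T.dag a) = T.e a := by
  rw [circ, dag, Function.rightInverse_invFun (T.tri_bij a).2, mul_inv_cancel_left]

omit hsurj in
lemma circ_one_dag : T.circ 1 (T.dag 1) = T.e 1 := T.circ_dag 1

lemma circ_dag_one : T.circ (T.dag 1) 1 = T.e 1 := by
  apply T.circ_left_cancel (a := (1:G))
  rw [← T.circ_assoc, T.circ_one_dag, T.left_id hsurj, T.right_id hsurj]

lemma sigma_one (a : G) : T.circ (T.circ a (T.dag 1)) 1 = a := by
  rw [T.circ_assoc, T.circ_dag_one hsurj, T.right_id hsurj]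

end TPG

/-- If the cocycle `Φ` of a twisted post group is surjective, then `(G, ∘)` is a
group and `a • b = (a ∘ 1†) ∘ b` makes `(G, ·, •)` a skew left brace. -/
theorem surjective_cocycle_skewBrace {G : Type*} [Group G] (T : TPG G)
    (hsurj : Function.Surjective T.phi) :
    (∀ a b c : G, T.circ (T.circ a b) c = T.circ a (T.circ b c)) ∧
    (∀ x : G, T.circ x (T.e 1) = x ∧ T.circ (T.e 1) x = x) ∧
    (∀ x : G, ∃ y : G, T.circ x y = T.e 1 ∧ T.circ y x = T.e 1) ∧
    (∀ a b c : G,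
      T.circ (T.circ (T.circ (T.circ a (T.dag 1)) b) (T.dag 1)) c =
        T.circ (T.circ a (T.dag 1)) (T.circ (T.circ b (T.dag 1)) c)) ∧
    (∀ a : G, T.circ (T.circ a (T.dag 1)) 1 = a ∧ T.circ (T.circ 1 (T.dag 1)) a = a) ∧
    (∀ a : G, ∃ b : G, T.circ (T.circ a (T.dag 1)) b = 1 ∧
      T.circ (T.circ b (T.dag 1)) a = 1) ∧
    (∀ a b c : G, T.circ (T.circ a (T.dag 1)) (b * c) =
      T.circ (T.circ a (T.dag 1)) b * a⁻¹ * T.circ (T.circ a (T.dag 1)) c) := by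
  refine ⟨T.circ_assoc, fun x => ⟨T.right_id hsurj x, T.left_id hsurj x⟩,
    T.circ_inv_ex hsurj, ?_, ?_, ?_, ?_⟩
  · intro a b c
    simp only [T.circ_assoc]
  · intro a
    refine ⟨T.sigma_one hsurj a, ?_⟩
    rw [T.circ_one_dag, T.left_id hsurj]
  · intro a
    obtain ⟨a', ha1, ha2⟩ := T.circ_inv_ex hsurj a
    refine ⟨T.circ 1 (T.circ a' 1), ?_, ?_⟩
    · rw [T.circ_assoc, ← T.circ_assoc (T.dag 1) 1, T.circ_dag_one hsurj,
        T.left_id hsurj, ← T.circ_assoc a a', ha1, T.left_id hsurj]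
    · rw [T.circ_assoc 1, T.circ_assoc a', T.circ_one_dag, T.right_id hsurj,
        T.circ_assoc 1, ha2, T.right_id hsurj]
  · intro a b c
    have hphi : T.phi (T.circ a (T.dag 1)) = a := by
      rw [← T.circ_one]; exact T.sigma_one hsurj a
    set s := T.circ a (T.dag 1) with hs
    simp only [TPG.circ, T.tri_mul, hphi]
    group
end
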